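/- (Usher finiteness, special case) Let (C, δ, v) be a chain complex of Λ-modules over the downward Novikov field Λ, where C is a finitely generated free Λ-module with basis x₁,…,x_N, v is the valuation v(Σ λᵢ xᵢ) = max_i (v_q(λᵢ) + Aᵢ) for fixed real numbers Aᵢ, and δ is v-nonincreasing. Then for every nonzero homology class a, the spectral number c(a) = inf{ v(X) : [X] = a } is finite (> -∞) and the infimum is attained, i.e. there exists a cycle X representing a with v(X) = c(a). -/

import Mathlib

/-- The downward universal Novikov ring over `R`: formal sums `Σ aᵢ q^{wᵢ}` with
`wᵢ → -∞`, modelled as Hahn series over `ℝᵒᵈ`. -/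
noncomputable abbrev Novikov (R : Type*) [Zero R] : Type _ := HahnSeries ℝᵒᵈ R

/-- The valuation `v_q` on the downward Novikov ring: the supremum of the exponents
appearing with nonzero coefficient, with `v_q 0 = ⊥` (i.e. `-∞`). -/
noncomputable def vq {R : Type*} [Zero R] (x : Novikov R) : WithBot ℝ :=
  letI := Classical.dec (x = 0)
  if x = 0 then ⊥ else ((OrderDual.ofDual x.order : ℝ) : WithBot ℝ)

/-- The valuation `v_q` with values in `EReal` (`v_q 0 = -∞`). -/
noncomputable def vqE {R : Type*} [Zero R] (x : Novikov R) : EReal :=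
  letI := Classical.dec (x = 0)
  if x = 0 then ⊥ else ((OrderDual.ofDual x.order : ℝ) : EReal)

/-- The valuation on a finitely generated free module over the Novikov ring, with
fixed action values `A i` of the basis elements. -/
noncomputable def chainVal {R : Type*} [Zero R] {N : ℕ} (A : Fin N → ℝ)
    (X : Fin N → Novikov R) : EReal :=
  ⨆ i : Fin N, (vqE (X i) + ((A i : ℝ) : EReal))

namespace UsherAux

open OrderDual

/-! ### EReal helpers -/

lemma er_cancel (r : ℝ) (x : EReal) : ((-r : ℝ) : EReal) + ((r : EReal) + x) = x := by
  induction x using EReal.rec with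
  | bot => simp
  | coe a =>
      rw [← EReal.coe_add, ← EReal.coe_add]
      congr 1
      ring
  | top =>
      rw [EReal.coe_add_top, EReal.coe_add_top]

lemma er_add_real_le_iff (x : EReal) (b r : ℝ) :
    x + (b : EReal) ≤ (r : EReal) ↔ x ≤ ((r - b : ℝ) : EReal) := by
  induction x using EReal.rec with
  | bot => simp
  | coe a =>
      rw [← EReal.coe_add, EReal.coe_le_coe_iff, EReal.coe_le_coe_iff]
      constructor <;> intro h <;> linarith
  | top =>
      simp only [EReal.top_add_coe]
      constructor <;> intro h <;> exact absurd (top_le_iff.mp h) (EReal.coe_ne_top _)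

lemma er_add_real_eq_bot_iff (x : EReal) (b : ℝ) :
    x + (b : EReal) = ⊥ ↔ x = ⊥ := by
  induction x using EReal.rec with
  | bot => simp
  | coe a => rw [← EReal.coe_add]; simp
  | top => simp [EReal.top_add_coe]

lemma er_add_real_ne_top (x : EReal) (hx : x ≠ ⊤) (b : ℝ) : x + (b : EReal) ≠ ⊤ := by
  induction x using EReal.rec with
  | bot => simp
  | coe a => rw [← EReal.coe_add]; exact EReal.coe_ne_top _
  | top => exact absurd rfl hx

lemma add_iSup' (r : ℝ) {ι : Sort*} (f : ι → EReal) :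
    (r : EReal) + ⨆ i, f i = ⨆ i, ((r : EReal) + f i) := by
  apply le_antisymm
  · have h : (⨆ i, f i) ≤ ((-r : ℝ) : EReal) + ⨆ i, ((r : EReal) + f i) := by
      apply iSup_le
      intro i
      calc f i = ((-r : ℝ) : EReal) + ((r : EReal) + f i) := (er_cancel r (f i)).symm
        _ ≤ ((-r : ℝ) : EReal) + ⨆ i, ((r : EReal) + f i) :=
            add_le_add_right (le_iSup (fun i => (r : EReal) + f i) i) (((-r : ℝ) : EReal))
    calc (r : EReal) + ⨆ i, f i
        ≤ (r : EReal) + (((-r : ℝ) : EReal) + ⨆ i, ((r : EReal) + f i)) :=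
          add_le_add_right h _
      _ = ⨆ i, ((r : EReal) + f i) := by
          have := er_cancel (-r) (⨆ i, ((r : EReal) + f i))
          rw [neg_neg] at this
          exact this
  · exact iSup_le fun i => add_le_add_right (le_iSup f i) _

lemma er_coe_max (a b : ℝ) : ((max a b : ℝ) : EReal) = max (a : EReal) (b : EReal) := by
  rcases le_total a b with h | h
  · rw [max_eq_right h, max_eq_right (EReal.coe_le_coe_iff.mpr h)]
  · rw [max_eq_left h, max_eq_left (EReal.coe_le_coe_iff.mpr h)]

lemma er_max_add (a b : EReal) (c : ℝ) :
    max a b + (c : EReal) = max (a + c) (b + c) := by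
  rcases le_total a b with h | h
  · rw [max_eq_right h, max_eq_right (add_le_add_left h _)]
  · rw [max_eq_left h, max_eq_left (add_le_add_left h _)]

variable {K : Type*} [Field K]

/-! ### vqE basics -/

lemma vqE_zero : vqE (0 : Novikov K) = ⊥ := by
  simp [vqE]

lemma vqE_of_ne {x : Novikov K} (hx : x ≠ 0) :
    vqE x = ((OrderDual.ofDual x.order : ℝ) : EReal) := by
  simp [vqE, hx]

lemma vqE_eq_bot_iff {x : Novikov K} : vqE x = ⊥ ↔ x = 0 := by
  constructor
  · intro h
    by_contra hx
    rw [vqE_of_ne hx] at h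
    exact (EReal.coe_ne_bot _) h
  · rintro rfl; exact vqE_zero

lemma vqE_ne_top (x : Novikov K) : vqE x ≠ ⊤ := by
  by_cases hx : x = 0
  · rw [hx, vqE_zero]; simp
  · rw [vqE_of_ne hx]; simp

lemma coeff_eq_zero_of_vqE_lt {x : Novikov K} {g : ℝ} (h : vqE x < (g : EReal)) :
    x.coeff (toDual g) = 0 := by
  by_cases hx : x = 0
  · simp [hx]
  · rw [vqE_of_ne hx, EReal.coe_lt_coe_iff] at h
    apply HahnSeries.coeff_eq_zero_of_lt_order
    exact h

lemma vqE_le_coe_iff {x : Novikov K} {t : ℝ} :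
    vqE x ≤ (t : EReal) ↔ ∀ g : ℝ, t < g → x.coeff (toDual g) = 0 := by
  constructor
  · intro h g hg
    exact coeff_eq_zero_of_vqE_lt (lt_of_le_of_lt h (EReal.coe_lt_coe_iff.mpr hg))
  · intro h
    by_cases hx : x = 0
    · rw [hx, vqE_zero]; exact bot_le
    · rw [vqE_of_ne hx, EReal.coe_le_coe_iff]
      by_contra hc
      push_neg at hc
      exact hx (HahnSeries.coeff_order_eq_zero.mp (h _ hc))

lemma vqE_add_le (x y : Novikov K) : vqE (x + y) ≤ max (vqE x) (vqE y) := by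
  by_cases hx : x = 0
  · simp [hx, le_max_right]
  by_cases hy : y = 0
  · simp [hy, le_max_left]
  obtain ⟨a, ha⟩ : ∃ a : ℝ, vqE x = (a : EReal) := ⟨_, vqE_of_ne hx⟩
  obtain ⟨b, hb⟩ : ∃ b : ℝ, vqE y = (b : EReal) := ⟨_, vqE_of_ne hy⟩
  rw [ha, hb, ← er_coe_max]
  rw [vqE_le_coe_iff]
  intro g hg
  rw [HahnSeries.coeff_add]
  rw [coeff_eq_zero_of_vqE_lt (x := x) (g := g)
      (by rw [ha]; exact_mod_cast lt_of_le_of_lt (le_max_left a b) hg),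
    coeff_eq_zero_of_vqE_lt (x := y) (g := g)
      (by rw [hb]; exact_mod_cast lt_of_le_of_lt (le_max_right a b) hg), add_zero]

lemma vqE_neg (x : Novikov K) : vqE (-x) = vqE x := by
  by_cases hx : x = 0
  · simp [hx]
  · rw [vqE_of_ne (neg_ne_zero.mpr hx), vqE_of_ne hx, HahnSeries.order_neg]

lemma vqE_sub_comm (x y : Novikov K) : vqE (x - y) = vqE (y - x) := by
  rw [← vqE_neg (x - y), neg_sub]

lemma vqE_mul (x y : Novikov K) : vqE (x * y) = vqE x + vqE y := by
  by_cases hx : x = 0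
  · simp [hx, vqE_zero, EReal.bot_add]
  by_cases hy : y = 0
  · simp [hy, vqE_zero, EReal.add_bot]
  rw [vqE_of_ne hx, vqE_of_ne hy, vqE_of_ne (mul_ne_zero hx hy),
    HahnSeries.order_mul hx hy, ← EReal.coe_add]
  rfl

/-! ### Pointwise smul helpers (avoiding Module-instance defeq issues) -/

variable {N : ℕ}

lemma psmul_apply (c : Novikov K) (X : Fin N → Novikov K) (i : Fin N) :
    (c • X) i = c * X i := rfl

lemma pzero_smul (X : Fin N → Novikov K) : (0 : Novikov K) • X = 0 :=
  funext fun i => zero_mul (X i)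

lemma pone_smul (X : Fin N → Novikov K) : (1 : Novikov K) • X = X :=
  funext fun i => one_mul (X i)

lemma psub_smul (a b : Novikov K) (X : Fin N → Novikov K) :
    (a - b) • X = a • X - b • X :=
  funext fun i => sub_mul a b (X i)

lemma pneg_smul (a : Novikov K) (X : Fin N → Novikov K) :
    (-a) • X = -(a • X) :=
  funext fun i => neg_mul a (X i)

lemma psmul_add (a : Novikov K) (X Y : Fin N → Novikov K) :
    a • (X + Y) = a • X + a • Y :=
  funext fun i => mul_add a (X i) (Y i)

lemma psmul_smul (a b : Novikov K) (X : Fin N → Novikov K) :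
    a • (b • X) = (a * b) • X :=
  funext fun i => (mul_assoc a b (X i)).symm

lemma psmul_sum (a : Novikov K) {m : ℕ} (f : Fin m → (Fin N → Novikov K)) :
    a • (∑ j, f j) = ∑ j, a • f j := by
  funext i
  rw [psmul_apply, Finset.sum_apply, Finset.sum_apply, Finset.mul_sum]
  rfl

/-! ### chainVal basics -/

variable (A : Fin N → ℝ)

lemma chainVal_def (X : Fin N → Novikov K) :
    chainVal A X = ⨆ i, (vqE (X i) + ((A i : ℝ) : EReal)) := rfl

lemma chainVal_zero : chainVal A (0 : Fin N → Novikov K) = ⊥ := by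
  simp [chainVal, vqE_zero, EReal.bot_add]

lemma chainVal_eq_bot_iff {X : Fin N → Novikov K} : chainVal A X = ⊥ ↔ X = 0 := by
  constructor
  · intro h
    funext i
    have hi : vqE (X i) + ((A i : ℝ) : EReal) = ⊥ := by
      have h2 := le_of_eq h
      rw [chainVal_def, iSup_le_iff] at h2
      exact le_bot_iff.mp (h2 i)
    rw [er_add_real_eq_bot_iff, vqE_eq_bot_iff] at hi
    exact hi
  · rintro rfl; exact chainVal_zero A

lemma chainVal_ne_top (X : Fin N → Novikov K) : chainVal A X ≠ ⊤ := by
  rcases isEmpty_or_nonempty (Fin N) with hE | hNE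
  · simp [chainVal, iSup_of_empty]
  · obtain ⟨i, hi⟩ := Finite.exists_max (fun i => vqE (X i) + ((A i : ℝ) : EReal))
    have hle : chainVal A X ≤ vqE (X i) + ((A i : ℝ) : EReal) := by
      rw [chainVal_def]; exact iSup_le hi
    intro h
    rw [h] at hle
    exact er_add_real_ne_top _ (vqE_ne_top _) _ (top_le_iff.mp hle)

lemma chainVal_exists_real {X : Fin N → Novikov K} (hX : X ≠ 0) :
    ∃ b : ℝ, chainVal A X = (b : EReal) := by
  have h1 : chainVal A X ≠ ⊥ := fun h => hX ((chainVal_eq_bot_iff A).mp h)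
  have h2 : chainVal A X ≠ ⊤ := chainVal_ne_top A X
  generalize hgen : chainVal A X = v at h1 h2 ⊢
  induction v using EReal.rec with
  | bot => exact absurd rfl h1
  | coe a => exact ⟨a, rfl⟩
  | top => exact absurd rfl h2

lemma chainVal_add_le (X Y : Fin N → Novikov K) :
    chainVal A (X + Y) ≤ max (chainVal A X) (chainVal A Y) := by
  rw [chainVal_def A (X + Y)]
  apply iSup_le
  intro i
  calc vqE (X i + Y i) + ((A i : ℝ) : EReal)
      ≤ max (vqE (X i)) (vqE (Y i)) + ((A i : ℝ) : EReal) :=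
        add_le_add_left (vqE_add_le _ _) _
    _ = max (vqE (X i) + ((A i : ℝ) : EReal)) (vqE (Y i) + ((A i : ℝ) : EReal)) :=
        er_max_add _ _ _
    _ ≤ max (chainVal A X) (chainVal A Y) := by
        rw [chainVal_def A X, chainVal_def A Y]
        exact max_le_max (le_iSup (fun i => vqE (X i) + ((A i : ℝ) : EReal)) i)
          (le_iSup (fun i => vqE (Y i) + ((A i : ℝ) : EReal)) i)

lemma chainVal_neg (X : Fin N → Novikov K) : chainVal A (-X) = chainVal A X := by
  simp only [chainVal, Pi.neg_apply, vqE_neg]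

lemma chainVal_sub_le (X Y : Fin N → Novikov K) :
    chainVal A (X - Y) ≤ max (chainVal A X) (chainVal A Y) := by
  rw [sub_eq_add_neg]
  calc chainVal A (X + -Y) ≤ max (chainVal A X) (chainVal A (-Y)) := chainVal_add_le A X (-Y)
    _ = max (chainVal A X) (chainVal A Y) := by rw [chainVal_neg]

lemma chainVal_smul (c : Novikov K) (X : Fin N → Novikov K) :
    chainVal A (c • X) = vqE c + chainVal A X := by
  by_cases hc : c = 0
  · rw [hc, vqE_zero, EReal.bot_add]
    rw [pzero_smul, chainVal_zero]
  obtain ⟨r, hr⟩ : ∃ r : ℝ, vqE c = (r : EReal) := ⟨_, vqE_of_ne hc⟩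
  have : ∀ i : Fin N, vqE ((c • X) i) + ((A i : ℝ) : EReal)
      = (r : EReal) + (vqE (X i) + ((A i : ℝ) : EReal)) := by
    intro i
    rw [psmul_apply, vqE_mul, hr, add_assoc]
  rw [chainVal_def, hr]
  calc (⨆ i, (vqE ((c • X) i) + ((A i : ℝ) : EReal)))
      = ⨆ i, ((r : EReal) + (vqE (X i) + ((A i : ℝ) : EReal))) := by
        exact iSup_congr this
    _ = (r : EReal) + chainVal A X := (add_iSup' r _).symm

/-! ### Spherical completeness of the Novikov field -/

lemma spherical (μ : ℕ → Novikov K) (ρ : ℕ → ℝ) (hρ : Antitone ρ)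
    (h : ∀ n m : ℕ, n ≤ m → vqE (μ m - μ n) ≤ (ρ n : EReal)) :
    ∃ x : Novikov K, ∀ n, vqE (x - μ n) ≤ (ρ n : EReal) := by
  classical
  set F : ℝᵒᵈ → K := fun g =>
    if hg : ∃ n, ρ n < ofDual g then (μ hg.choose).coeff g else 0 with hF
  have key2 : ∀ (g : ℝᵒᵈ) (a b : ℕ), a ≤ b → ρ a < ofDual g →
      (μ b).coeff g = (μ a).coeff g := by
    intro g a b hab ha
    have h1 : vqE (μ b - μ a) < ((ofDual g : ℝ) : EReal) :=
      lt_of_le_of_lt (h a b hab) (EReal.coe_lt_coe_iff.mpr ha)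
    have h2 := coeff_eq_zero_of_vqE_lt h1
    rw [HahnSeries.coeff_sub] at h2
    have : toDual (ofDual g) = g := rfl
    rw [this] at h2
    exact sub_eq_zero.mp h2
  have key : ∀ (g : ℝᵒᵈ) (a b : ℕ), ρ a < ofDual g → ρ b < ofDual g →
      (μ a).coeff g = (μ b).coeff g := by
    intro g a b ha hb
    rw [← key2 g a (max a b) (le_max_left a b) ha,
      ← key2 g b (max a b) (le_max_right a b) hb]
  have hcons : ∀ (g : ℝᵒᵈ) (n : ℕ), ρ n < ofDual g → F g = (μ n).coeff g := by
    intro g n hn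
    have hg : ∃ m, ρ m < ofDual g := ⟨n, hn⟩
    rw [hF]
    simp only [dif_pos hg]
    exact key g hg.choose n hg.choose_spec hn
  have hsupp : (Function.support F).IsPWO := by
    apply Set.IsWF.isPWO
    rw [Set.isWF_iff_no_descending_seq]
    intro f hf hmem
    have h0 : F (f 0) ≠ 0 := hmem 0
    have hex : ∃ n, ρ n < ofDual (f 0) := by
      by_contra hc
      exact h0 (dif_neg hc)
    obtain ⟨n₀, hn₀⟩ := hex
    have hmem' : ∀ k, f k ∈ (μ n₀).support := by
      intro k
      have hle : f k ≤ f 0 := hf.antitone (Nat.zero_le k)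
      have hlt : ρ n₀ < ofDual (f k) := lt_of_lt_of_le hn₀ hle
      have := hcons (f k) n₀ hlt
      have hk : F (f k) ≠ 0 := hmem k
      rw [this] at hk
      exact hk
    exact Set.isWF_iff_no_descending_seq.mp (μ n₀).isPWO_support.isWF f hf hmem'
  refine ⟨⟨F, hsupp⟩, ?_⟩
  intro n
  rw [vqE_le_coe_iff]
  intro g hg
  rw [HahnSeries.coeff_sub]
  have : (⟨F, hsupp⟩ : Novikov K).coeff (toDual g) = F (toDual g) := rfl
  rw [this, hcons (toDual g) n hg, sub_self]

/-! ### Orthogonal families -/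

/-- A family of nonzero vectors is orthogonal if the valuation of every linear
combination is the max of the valuations of the summands. -/
def Orth {m : ℕ} (u : Fin m → (Fin N → Novikov K)) : Prop :=
  (∀ j, u j ≠ 0) ∧ ∀ c : Fin m → Novikov K,
    chainVal A (∑ j, c j • u j) = ⨆ j, (vqE (c j) + chainVal A (u j))

lemma iSup_fin_succ {m : ℕ} (f : Fin (m + 1) → EReal) :
    (⨆ j, f j) = max (f 0) (⨆ j : Fin m, f j.succ) := by
  apply le_antisymm
  · apply iSup_le
    intro j
    induction j using Fin.cases with
    | zero => exact le_max_left _ _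
    | succ j => exact le_max_of_le_right (le_iSup (fun j : Fin m => f j.succ) j)
  · exact max_le (le_iSup f 0) (iSup_le fun j => le_iSup f j.succ)

/-- Attainment of the distance from a point to the span of an orthogonal family. -/
lemma attains {m : ℕ} {u : Fin m → (Fin N → Novikov K)} (hu : Orth A u)
    (Z : Fin N → Novikov K) :
    ∃ cstar : Fin m → Novikov K, ∀ c : Fin m → Novikov K,
      chainVal A (Z - ∑ j, cstar j • u j) ≤ chainVal A (Z - ∑ j, c j • u j) := by
  classical
  set d := ⨅ c : Fin m → Novikov K, chainVal A (Z - ∑ j, c j • u j) with hd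
  set r : ℕ → ℝ := if d = ⊥ then (fun n => -(n : ℝ)) else (fun n => d.toReal + 1 / (n + 1))
    with hrdef
  have hd_ne_top : d ≠ ⊤ := by
    intro h
    have : d ≤ chainVal A (Z - ∑ j, (0 : Fin m → Novikov K) j • u j) := iInf_le _ 0
    rw [h, top_le_iff] at this
    exact chainVal_ne_top A _ this
  have hr_anti : Antitone r := by
    rw [hrdef]
    split_ifs with hdb
    · intro a b hab
      simp only [neg_le_neg_iff, Nat.cast_le]
      exact_mod_cast hab
    · intro a b hab
      have : (1 : ℝ) / (b + 1) ≤ 1 / (a + 1) := by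
        apply one_div_le_one_div_of_le
        · positivity
        · exact_mod_cast add_le_add_left (Nat.cast_le.mpr hab) 1
      linarith
  have hr_gt : ∀ n, d < ((r n : ℝ) : EReal) := by
    intro n
    rw [hrdef]
    split_ifs with hdb
    · rw [hdb]; exact bot_lt_iff_ne_bot.mpr (EReal.coe_ne_bot _)
    · have hdr : d = ((d.toReal : ℝ) : EReal) := (EReal.coe_toReal hd_ne_top hdb).symm
      rw [hdr]
      rw [EReal.coe_lt_coe_iff]
      have : (0 : ℝ) < 1 / (n + 1) := by positivity
      simp only [EReal.toReal_coe]
      linarith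
  have hr_le : ∀ x : EReal, (∀ n, x ≤ ((r n : ℝ) : EReal)) → x ≤ d := by
    intro x hx
    induction x using EReal.rec with
    | bot => exact bot_le
    | top =>
        exfalso
        exact (EReal.coe_ne_top (r 0)) (top_le_iff.mp (hx 0))
    | coe xr =>
        rw [hrdef] at hx
        by_cases hdb : d = ⊥
        · exfalso
          simp only [hdb, if_pos] at hx
          obtain ⟨n, hn⟩ := exists_nat_gt (-xr)
          have := hx n
          rw [EReal.coe_le_coe_iff] at this
          linarith
        · have hdr : d = ((d.toReal : ℝ) : EReal) := (EReal.coe_toReal hd_ne_top hdb).symm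
          rw [hdr, EReal.coe_le_coe_iff]
          by_contra hc
          push_neg at hc
          obtain ⟨n, hn⟩ := exists_nat_one_div_lt (show (0:ℝ) < xr - d.toReal by linarith)
          have := hx n
          simp only [if_neg hdb] at this
          rw [EReal.coe_le_coe_iff] at this
          linarith
  -- choose approximating sequence
  have hseq : ∀ n : ℕ, ∃ c : Fin m → Novikov K,
      chainVal A (Z - ∑ j, c j • u j) < ((r n : ℝ) : EReal) := by
    intro n
    have := hr_gt n
    rw [hd] at this
    exact iInf_lt_iff.mp this
  choose cseq hcseq using hseq
  have hb_ex : ∀ j : Fin m, ∃ b : ℝ, chainVal A (u j) = (b : EReal) :=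
    fun j => chainVal_exists_real A (hu.1 j)
  choose b hb using hb_ex
  -- pairwise coefficient bounds
  have hpair : ∀ (n k : ℕ), n ≤ k → ∀ j : Fin m,
      vqE (cseq k j - cseq n j) ≤ ((r n - b j : ℝ) : EReal) := by
    intro n k hnk j
    have hdiff : (∑ j, (cseq k j - cseq n j) • u j)
        = (Z - ∑ j, cseq n j • u j) - (Z - ∑ j, cseq k j • u j) := by
      rw [sub_sub_sub_cancel_left, ← Finset.sum_sub_distrib]
      exact Finset.sum_congr rfl fun j _ => psub_smul _ _ _
    have hval : chainVal A (∑ j, (cseq k j - cseq n j) • u j) ≤ ((r n : ℝ) : EReal) := by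
      rw [hdiff]
      calc chainVal A ((Z - ∑ j, cseq n j • u j) - (Z - ∑ j, cseq k j • u j))
          ≤ max (chainVal A (Z - ∑ j, cseq n j • u j))
              (chainVal A (Z - ∑ j, cseq k j • u j)) := chainVal_sub_le A _ _
        _ ≤ ((r n : ℝ) : EReal) := by
            apply max_le
            · exact le_of_lt (hcseq n)
            · exact le_trans (le_of_lt (hcseq k))
                (EReal.coe_le_coe_iff.mpr (hr_anti hnk))
    rw [hu.2] at hval
    have hterm : vqE (cseq k j - cseq n j) + chainVal A (u j) ≤ ((r n : ℝ) : EReal) :=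
      le_trans (le_iSup (fun j => vqE (cseq k j - cseq n j) + chainVal A (u j)) j) hval
    rw [hb j, er_add_real_le_iff] at hterm
    exact hterm
  -- apply spherical completeness coordinatewise
  have hsph : ∀ j : Fin m, ∃ x : Novikov K,
      ∀ n, vqE (x - cseq n j) ≤ ((r n - b j : ℝ) : EReal) := by
    intro j
    apply spherical (fun n => cseq n j) (fun n => r n - b j)
    · intro a b' hab
      have := hr_anti hab
      dsimp only
      linarith
    · intro n k hnk
      exact hpair n k hnk j
  choose cstar hcstar using hsph
  refine ⟨cstar, ?_⟩
  have hclose : ∀ n, chainVal A (∑ j, (cseq n j - cstar j) • u j) ≤ ((r n : ℝ) : EReal) := by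
    intro n
    rw [hu.2]
    apply iSup_le
    intro j
    have h1 : vqE (cseq n j - cstar j) ≤ ((r n - b j : ℝ) : EReal) := by
      rw [vqE_sub_comm]
      exact hcstar j n
    calc vqE (cseq n j - cstar j) + chainVal A (u j)
        ≤ ((r n - b j : ℝ) : EReal) + ((b j : ℝ) : EReal) := by
          rw [hb j]
          exact add_le_add_left h1 _
      _ = ((r n : ℝ) : EReal) := by
          rw [← EReal.coe_add]
          norm_num
  have hfinal : ∀ n, chainVal A (Z - ∑ j, cstar j • u j) ≤ ((r n : ℝ) : EReal) := by
    intro n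
    have hsplit : Z - ∑ j, cstar j • u j
        = (Z - ∑ j, cseq n j • u j) + (∑ j, (cseq n j - cstar j) • u j) := by
      have : (∑ j, (cseq n j - cstar j) • u j)
          = (∑ j, cseq n j • u j) - ∑ j, cstar j • u j := by
        rw [← Finset.sum_sub_distrib]
        exact Finset.sum_congr rfl fun j _ => psub_smul _ _ _
      rw [this]
      abel
    rw [hsplit]
    calc chainVal A ((Z - ∑ j, cseq n j • u j) + (∑ j, (cseq n j - cstar j) • u j))
        ≤ max (chainVal A (Z - ∑ j, cseq n j • u j))
            (chainVal A (∑ j, (cseq n j - cstar j) • u j)) := chainVal_add_le A _ _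
      _ ≤ ((r n : ℝ) : EReal) := max_le (le_of_lt (hcseq n)) (hclose n)
  intro c
  calc chainVal A (Z - ∑ j, cstar j • u j) ≤ d := hr_le _ hfinal
    _ ≤ chainVal A (Z - ∑ j, c j • u j) := iInf_le _ c

/-! ### Existence of orthogonal spanning families -/

lemma exists_orth : ∀ (k : ℕ) (w : Fin k → (Fin N → Novikov K)),
    ∃ (m : ℕ) (u : Fin m → (Fin N → Novikov K)), Orth A u ∧
      Submodule.span (Novikov K) (Set.range u) = Submodule.span (Novikov K) (Set.range w) := by
  intro k
  induction k with
  | zero =>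
      intro w
      refine ⟨0, Fin.elim0, ⟨fun j => j.elim0, fun c => ?_⟩, ?_⟩
      · rw [Finset.univ_eq_empty, Finset.sum_empty, chainVal_zero, iSup_of_empty]
      · congr 1
        rw [Set.range_eq_empty, Set.range_eq_empty]
  | succ k ih =>
      intro w
      obtain ⟨m, u, hu, hspan⟩ := ih (w ∘ Fin.succ)
      obtain ⟨cstar, hmin⟩ := attains A hu (w 0)
      set wt := w 0 - ∑ j, cstar j • u j with hwt
      have hsum_mem : (∑ j, cstar j • u j) ∈ Submodule.span (Novikov K) (Set.range u) :=
        Submodule.sum_mem _ fun j _ =>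
          Submodule.smul_mem _ _ (Submodule.subset_span ⟨j, rfl⟩)
      have hrange_succ : ∀ i : Fin k,
          w i.succ ∈ Submodule.span (Novikov K) (Set.range u) := by
        intro i
        rw [hspan]
        exact Submodule.subset_span ⟨i, rfl⟩
      by_cases hwt0 : wt = 0
      · refine ⟨m, u, hu, ?_⟩
        apply le_antisymm
        · rw [hspan]
          apply Submodule.span_mono
          rintro _ ⟨i, rfl⟩
          exact ⟨i.succ, rfl⟩
        · rw [Submodule.span_le]
          rintro _ ⟨i, rfl⟩
          induction i using Fin.cases with
          | zero =>
              have : w 0 = ∑ j, cstar j • u j := by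
                rw [hwt] at hwt0
                exact sub_eq_zero.mp hwt0
              rw [this]
              exact hsum_mem
          | succ i => exact hrange_succ i
      · refine ⟨m + 1, Fin.cons wt u, ⟨?_, ?_⟩, ?_⟩
        · intro j
          induction j using Fin.cases with
          | zero => rw [Fin.cons_zero]; exact hwt0
          | succ j => rw [Fin.cons_succ]; exact hu.1 j
        · intro c
          have hsum : (∑ j : Fin (m + 1), c j • Fin.cons wt u j)
              = c 0 • wt + ∑ j : Fin m, c j.succ • u j := by
            rw [Fin.sum_univ_succ, Fin.cons_zero]
            congr 1
          obtain ⟨B, hB⟩ : ∃ B : ℝ, chainVal A wt = (B : EReal) :=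
            chainVal_exists_real A hwt0
          set S := ∑ j : Fin m, c j.succ • u j with hS
          -- (b) : vqE (c 0) + chainVal wt ≤ chainVal (c 0 • wt + S)
          have hbb : vqE (c 0) + chainVal A wt ≤ chainVal A (c 0 • wt + S) := by
            by_cases hc0 : c 0 = 0
            · rw [hc0, vqE_zero, EReal.bot_add]
              exact bot_le
            · have hrw : c 0 • wt + S = c 0 • (wt + (c 0)⁻¹ • S) := by
                rw [psmul_add, psmul_smul, mul_inv_cancel₀ hc0, pone_smul]
              have hmem2 : wt + (c 0)⁻¹ • S
                  = w 0 - ∑ j, (cstar j - (c 0)⁻¹ * c j.succ) • u j := by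
                rw [hwt]
                have : (∑ j, (cstar j - (c 0)⁻¹ * c j.succ) • u j)
                    = (∑ j, cstar j • u j) - (c 0)⁻¹ • S := by
                  rw [hS, psmul_sum, ← Finset.sum_sub_distrib]
                  refine Finset.sum_congr rfl fun j _ => ?_
                  rw [psub_smul, psmul_smul]
                rw [this]
                abel
              have hge : chainVal A wt ≤ chainVal A (wt + (c 0)⁻¹ • S) := by
                rw [hmem2]
                exact hmin _
              rw [hrw, chainVal_smul]
              exact add_le_add_right hge _
          -- (a) : chainVal S ≤ chainVal (c 0 • wt + S)
          have haa : chainVal A S ≤ chainVal A (c 0 • wt + S) := by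
            have hS2 : (c 0 • wt + S) + (-(c 0 • wt)) = S := by abel
            calc chainVal A S
                = chainVal A ((c 0 • wt + S) + (-(c 0 • wt))) := by rw [hS2]
              _ ≤ max (chainVal A (c 0 • wt + S)) (chainVal A (-(c 0 • wt))) :=
                  chainVal_add_le A _ _
              _ ≤ chainVal A (c 0 • wt + S) := by
                  apply max_le le_rfl
                  rw [chainVal_neg, chainVal_smul]
                  exact hbb
          rw [hsum]
          set f : Fin (m + 1) → EReal :=
            fun j => vqE (c j) + chainVal A ((Fin.cons wt u : Fin (m + 1) → Fin N → Novikov K) j) with hfdef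
          have hf0 : f 0 = vqE (c 0) + chainVal A wt := by
            rw [hfdef]; simp only [Fin.cons_zero]
          have hfs : ∀ j : Fin m, f j.succ = vqE (c j.succ) + chainVal A (u j) := by
            intro j; rw [hfdef]; simp only [Fin.cons_succ]
          have hmax : (⨆ j, f j) = max (chainVal A (c 0 • wt)) (chainVal A S) := by
            rw [iSup_fin_succ f, hf0, chainVal_smul]
            congr 1
            rw [hS, hu.2 (fun j => c j.succ)]
            exact (iSup_congr hfs).symm
          show chainVal A (c 0 • wt + S) = ⨆ j, f j
          apply le_antisymm
          · rw [hmax]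
            exact chainVal_add_le A _ _
          · rw [hmax]
            apply max_le
            · rw [chainVal_smul]; exact hbb
            · exact haa
        · -- span equality
          apply le_antisymm
          · rw [Submodule.span_le]
            rintro _ ⟨j, rfl⟩
            induction j using Fin.cases with
            | zero =>
                rw [Fin.cons_zero, hwt]
                apply sub_mem
                · exact Submodule.subset_span ⟨0, rfl⟩
                · apply Submodule.sum_mem
                  intro j _
                  apply Submodule.smul_mem
                  have hj := Submodule.subset_span (R := Novikov K) (s := Set.range u) ⟨j, rfl⟩
                  rw [hspan] at hj
                  refine Submodule.span_mono ?_ hj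
                  rintro _ ⟨i, rfl⟩
                  exact ⟨i.succ, rfl⟩
            | succ j =>
                rw [Fin.cons_succ]
                have hj := Submodule.subset_span (R := Novikov K) (s := Set.range u) ⟨j, rfl⟩
                rw [hspan] at hj
                refine Submodule.span_mono ?_ hj
                rintro _ ⟨i, rfl⟩
                exact ⟨i.succ, rfl⟩
          · rw [Submodule.span_le]
            rintro _ ⟨i, rfl⟩
            have hu_sub : Submodule.span (Novikov K) (Set.range u)
                ≤ Submodule.span (Novikov K) (Set.range (Fin.cons wt u)) := by
              apply Submodule.span_mono
              rintro _ ⟨j, rfl⟩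
              exact ⟨j.succ, by rw [Fin.cons_succ]⟩
            induction i using Fin.cases with
            | zero =>
                have hw0 : w 0 = wt + ∑ j, cstar j • u j := by
                  rw [hwt]; abel
                rw [hw0]
                apply add_mem
                · exact Submodule.subset_span ⟨0, by rw [Fin.cons_zero]⟩
                · exact hu_sub hsum_mem
            | succ i =>
                apply hu_sub
                exact hrange_succ i

end UsherAux

open UsherAux in
theorem usher_finiteness_spectrality
    (K : Type*) [Field K] (N : ℕ) (A : Fin N → ℝ)
    (δ : (Fin N → Novikov K) →ₗ[Novikov K] (Fin N → Novikov K))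
    (hδ2 : ∀ X, δ (δ X) = 0)
    (hfilt : ∀ X, chainVal A (δ X) ≤ chainVal A X)
    (Z : Fin N → Novikov K) (hZ : δ Z = 0) (hnz : ∀ Y, Z ≠ δ Y) :
    (⨅ Y : Fin N → Novikov K, chainVal A (Z + δ Y)) ≠ (⊥ : EReal) ∧
    ∃ Y : Fin N → Novikov K,
      chainVal A (Z + δ Y) = ⨅ Y' : Fin N → Novikov K, chainVal A (Z + δ Y') := by
  classical
  set w : Fin N → (Fin N → Novikov K) := fun i => δ (Pi.single i (1 : Novikov K) : Fin N → Novikov K) with hw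
  have hrange : Submodule.span (Novikov K) (Set.range w) = LinearMap.range δ := by
    apply le_antisymm
    · rw [Submodule.span_le]
      rintro _ ⟨i, rfl⟩
      exact ⟨(Pi.single i (1 : Novikov K) : Fin N → Novikov K), rfl⟩
    · rintro _ ⟨Y, rfl⟩
      have hY : Y = ∑ i, Y i • (Pi.single i (1 : Novikov K) : Fin N → Novikov K) := by
        funext j
        rw [Finset.sum_apply]
        have : ∀ i, (Y i • (Pi.single i (1 : Novikov K) : Fin N → Novikov K)) j
            = if j = i then Y i else 0 := by
          intro i
          rw [psmul_apply (K := K) (Y i) (Pi.single i (1 : Novikov K) : Fin N → Novikov K) j, Pi.single_apply]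
          split_ifs with h
          · rw [mul_one]
          · rw [mul_zero]
        rw [Finset.sum_congr rfl fun i _ => this i, Finset.sum_ite_eq Finset.univ j (fun i => Y i)]
        simp
      have hδY : δ Y = ∑ i, Y i • w i := by
        conv_lhs => rw [hY]
        rw [map_sum]
        apply Finset.sum_congr rfl
        intro i _
        rw [map_smul, hw]
      rw [hδY]
      exact Submodule.sum_mem _ fun i _ =>
        Submodule.smul_mem _ _ (Submodule.subset_span ⟨i, rfl⟩)
  obtain ⟨m, u, hu, hspan⟩ := exists_orth A N w
  obtain ⟨cstar, hmin⟩ := attains A hu Z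
  have hspan' : Submodule.span (Novikov K) (Set.range u) = LinearMap.range δ := by
    rw [hspan, hrange]
  have hWmem : (∑ j, cstar j • u j) ∈ LinearMap.range δ := by
    rw [← hspan']
    exact Submodule.sum_mem _ fun j _ =>
      Submodule.smul_mem _ _ (Submodule.subset_span ⟨j, rfl⟩)
  obtain ⟨Y₀, hY₀⟩ : ∃ Y₀, δ Y₀ = -∑ j, cstar j • u j := by
    obtain ⟨Y', hY'⟩ := hWmem
    exact ⟨-Y', by rw [map_neg, hY']⟩
  have hZY₀ : Z + δ Y₀ = Z - ∑ j, cstar j • u j := by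
    rw [hY₀]; abel
  have hkey : ∀ Y, chainVal A (Z + δ Y₀) ≤ chainVal A (Z + δ Y) := by
    intro Y
    have hmem : δ Y ∈ Submodule.span (Novikov K) (Set.range u) := by
      rw [hspan']; exact ⟨Y, rfl⟩
    obtain ⟨c, hc⟩ := (Submodule.mem_span_range_iff_exists_fun (Novikov K)).mp hmem
    have hZY : Z + δ Y = Z - ∑ j, (-c j) • u j := by
      have hsum : (∑ j, (-c j) • u j) = -∑ j, c j • u j := by
        rw [← Finset.sum_neg_distrib]
        exact Finset.sum_congr rfl fun j _ => pneg_smul _ _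
      rw [hsum, hc]
      abel
    rw [hZY₀, hZY]
    exact hmin _
  have heq : chainVal A (Z + δ Y₀)
      = ⨅ Y' : Fin N → Novikov K, chainVal A (Z + δ Y') :=
    le_antisymm (le_iInf hkey) (iInf_le _ Y₀)
  constructor
  · intro hbot
    rw [← heq] at hbot
    have hz : Z + δ Y₀ = 0 := (chainVal_eq_bot_iff A).mp hbot
    have hzz : Z = δ (-Y₀) := by
      rw [map_neg]
      exact eq_neg_of_add_eq_zero_left hz
    exact hnz (-Y₀) hzz
  · exact ⟨Y₀, heq⟩
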